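/- (Expected maximum of penalized exponential perturbations) Let F be a nonempty finite set, h : F → [0,∞), and let (Z_f)_{f ∈ F} be independent random variables each with the standard exponential distribution. Set u = Σ_{f ∈ F} e^{−h(f)}. Then E[ sup_{f ∈ F} ( Z_f − h(f) ) ] ≤ 1 + ln u. -/

import Mathlib

open MeasureTheory ProbabilityTheory Real ENNReal

noncomputable section

namespace SLPC

/-- The standard exponential distribution on `ℝ` (density `e^{-z} 1_{z>0}`). -/
def expMeasure : Measure ℝ :=
  MeasureTheory.volume.withDensity fun z =>
    ENNReal.ofReal (if 0 < z then Real.exp (-z) else 0)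

lemma expMeasure_Ioi {r : ℝ} (hr : 0 ≤ r) :
    expMeasure (Set.Ioi r) = ENNReal.ofReal (Real.exp (-r)) := by
  rw [expMeasure, withDensity_apply _ measurableSet_Ioi]
  have hcong : ∀ z ∈ Set.Ioi r,
      ENNReal.ofReal (if 0 < z then Real.exp (-z) else 0) = ENNReal.ofReal (Real.exp (-z)) := by
    intro z hz
    rw [if_pos (lt_of_le_of_lt hr hz)]
  rw [setLIntegral_congr_fun measurableSet_Ioi (fun z hz => hcong z hz),
    ← ofReal_integral_eq_lintegral_ofReal
      (by exact (by simpa using exp_neg_integrableOn_Ioi r one_pos : IntegrableOn (fun x : ℝ => Real.exp (-x)) (Set.Ioi r)))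
      (Filter.Eventually.of_forall fun x => (Real.exp_pos _).le),
    integral_exp_neg_Ioi]

lemma integrable_id_expMeasure : Integrable (fun z : ℝ => z) expMeasure := by
  have hdm : Measurable fun z : ℝ => ENNReal.ofReal (if 0 < z then Real.exp (-z) else 0) :=
    ENNReal.measurable_ofReal.comp
      (Measurable.ite (measurableSet_lt measurable_const measurable_id)
        (Real.measurable_exp.comp measurable_neg) measurable_const)
  rw [expMeasure, integrable_withDensity_iff hdm
    (Filter.Eventually.of_forall fun x => ENNReal.ofReal_lt_top)]
  have hG : IntegrableOn (fun x : ℝ => Real.exp (-x) * x) (Set.Ioi 0) := by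
    have h2 := Real.GammaIntegral_convergent (s := 2) (by norm_num)
    norm_num [Real.rpow_one] at h2
    exact h2
  have heq : (fun x : ℝ => x * (ENNReal.ofReal (if 0 < x then Real.exp (-x) else 0)).toReal)
      = Set.indicator (Set.Ioi 0) (fun x => Real.exp (-x) * x) := by
    ext x
    by_cases hx : 0 < x
    · simp [Set.indicator, hx, ENNReal.toReal_ofReal (Real.exp_pos x).le, mul_comm]
      exact Or.inl (Real.exp_pos (-x)).le
    · simp [Set.indicator, hx]
  rw [heq, integrable_indicator_iff measurableSet_Ioi]
  exact hG

/-- **Expected maximum of penalized exponential perturbations.** If `(Z_f)_{f ∈ F}` are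
independent standard exponential random variables and `u = ∑_f e^{-h(f)}`, then
`E[sup_f (Z_f - h(f))] ≤ 1 + ln u`. -/
theorem exp_sup_expectation
    (F : Type*) [Fintype F] [Nonempty F]
    (h : F → ℝ) (hh : ∀ f, 0 ≤ h f)
    (Ω : Type*) [MeasurableSpace Ω] (P : Measure Ω) [IsProbabilityMeasure P]
    (Z : F → Ω → ℝ) (hmeas : ∀ f, Measurable (Z f))
    (hdist : ∀ f, Measure.map (Z f) P = expMeasure)
    (hindep : iIndepFun Z P) :
    ∫ ω, (⨆ f, (Z f ω - h f)) ∂P ≤ 1 + Real.log (∑ f, Real.exp (-(h f))) := by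
  classical
  set u : ℝ := ∑ f, Real.exp (-(h f)) with hu_def
  have hu_pos : 0 < u :=
    Finset.sum_pos (fun f _ => Real.exp_pos _) ⟨Classical.arbitrary F, Finset.mem_univ _⟩
  set L : ℝ := Real.log u with hL_def
  have hL_ge : ∀ f, -(h f) ≤ L := by
    intro f
    have h1 : Real.exp (-(h f)) ≤ u :=
      Finset.single_le_sum (f := fun f => Real.exp (-(h f))) (fun g _ => (Real.exp_pos _).le) (Finset.mem_univ f)
    calc -(h f) = Real.log (Real.exp (-(h f))) := (Real.log_exp _).symm
      _ ≤ L := Real.log_le_log (Real.exp_pos _) h1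
  set M : Ω → ℝ := fun ω => ⨆ f, (Z f ω - h f) with hM_def
  have hMmeas : Measurable M := Measurable.iSup fun f => (hmeas f).sub measurable_const
  have hbdd : ∀ ω, BddAbove (Set.range fun f => Z f ω - h f) := fun ω =>
    (Set.finite_range _).bddAbove
  -- each Z f is integrable
  have hZint : ∀ f, Integrable (Z f) P := by
    intro f
    have := (integrable_map_measure aestronglyMeasurable_id (hmeas f).aemeasurable).mp
      (by rw [hdist f]; exact integrable_id_expMeasure)
    exact this
  -- M is integrable
  have hMint : Integrable M P := by
    have hsum : Integrable (fun ω => ∑ f, |Z f ω - h f|) P :=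
      integrable_finset_sum _ fun f _ => ((hZint f).sub (integrable_const _)).abs
    refine hsum.mono' hMmeas.aestronglyMeasurable (Filter.Eventually.of_forall fun ω => ?_)
    rw [Real.norm_eq_abs, abs_le]
    constructor
    · obtain ⟨f0⟩ := ‹Nonempty F›
      have h1 : Z f0 ω - h f0 ≤ M ω := le_ciSup (hbdd ω) f0
      have h2 : -|Z f0 ω - h f0| ≤ Z f0 ω - h f0 := neg_abs_le _
      have h3 : |Z f0 ω - h f0| ≤ ∑ f, |Z f ω - h f| :=
        Finset.single_le_sum (f := fun f => |Z f ω - h f|) (fun g _ => abs_nonneg _) (Finset.mem_univ f0)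
      linarith
    · exact ciSup_le fun f => (le_abs_self _).trans
        (Finset.single_le_sum (f := fun f => |Z f ω - h f|) (fun g _ => abs_nonneg _) (Finset.mem_univ f))
  -- the positive part g = (M - L)⁺
  set g : Ω → ℝ := fun ω => max (M ω - L) 0 with hg_def
  have hgmeas : Measurable g := (hMmeas.sub measurable_const).max measurable_const
  have hgnn : ∀ ω, 0 ≤ g ω := fun ω => le_max_right _ _
  have hgint : Integrable g P := by
    refine ((hMint.sub (integrable_const L)).abs).mono' hgmeas.aestronglyMeasurable
      (Filter.Eventually.of_forall fun ω => ?_)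
    rw [Real.norm_eq_abs, abs_of_nonneg (hgnn ω)]
    exact max_le (le_abs_self _) (abs_nonneg _)
  -- key tail bound on integral of g
  have key : ∫ ω, g ω ∂P ≤ 1 := by
    rw [integral_eq_lintegral_of_nonneg_ae (Filter.Eventually.of_forall hgnn)
      hgmeas.aestronglyMeasurable,
      lintegral_eq_lintegral_meas_lt P (Filter.Eventually.of_forall hgnn) hgmeas.aemeasurable]
    have hb : ∀ t ∈ Set.Ioi (0:ℝ), P {a | t < g a} ≤ ENNReal.ofReal (Real.exp (-t)) := by
      intro t ht
      rw [Set.mem_Ioi] at ht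
      have hsub : {a | t < g a} ⊆ ⋃ f, Z f ⁻¹' Set.Ioi (h f + L + t) := by
        intro a ha
        rw [Set.mem_setOf_eq] at ha
        have hlt : L + t < M a := by
          rcases lt_max_iff.mp ha with h1 | h1
          · linarith
          · linarith
        obtain ⟨f, hf⟩ := (lt_ciSup_iff (hbdd a)).mp hlt
        exact Set.mem_iUnion.mpr ⟨f, by simp only [Set.mem_preimage, Set.mem_Ioi]; linarith⟩
      have hsum_eq : ∑ f, Real.exp (-(h f + L + t)) = Real.exp (-t) := by
        have hterm : ∀ f, Real.exp (-(h f + L + t))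
            = Real.exp (-(h f)) * (Real.exp (-L) * Real.exp (-t)) := by
          intro f
          rw [← Real.exp_add, ← Real.exp_add]
          ring_nf
        rw [Finset.sum_congr rfl fun f _ => hterm f, ← Finset.sum_mul, ← hu_def,
          Real.exp_neg, Real.exp_log hu_pos]
        field_simp
      calc P {a | t < g a} ≤ P (⋃ f, Z f ⁻¹' Set.Ioi (h f + L + t)) := measure_mono hsub
        _ ≤ ∑' f, P (Z f ⁻¹' Set.Ioi (h f + L + t)) := measure_iUnion_le _
        _ = ∑ f, P (Z f ⁻¹' Set.Ioi (h f + L + t)) := tsum_fintype _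
        _ = ∑ f, ENNReal.ofReal (Real.exp (-(h f + L + t))) := by
            refine Finset.sum_congr rfl fun f _ => ?_
            have hmap : P (Z f ⁻¹' Set.Ioi (h f + L + t)) = expMeasure (Set.Ioi (h f + L + t)) := by
              rw [← hdist f, Measure.map_apply (hmeas f) measurableSet_Ioi]
            rw [hmap, expMeasure_Ioi (by have := hL_ge f; linarith)]
        _ = ENNReal.ofReal (∑ f, Real.exp (-(h f + L + t))) :=
            (ENNReal.ofReal_sum_of_nonneg fun f _ => (Real.exp_pos _).le).symm
        _ = ENNReal.ofReal (Real.exp (-t)) := by rw [hsum_eq]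
    have hle : (∫⁻ t in Set.Ioi (0:ℝ), P {a | t < g a})
        ≤ ∫⁻ t in Set.Ioi (0:ℝ), ENNReal.ofReal (Real.exp (-t)) :=
      setLIntegral_mono (ENNReal.measurable_ofReal.comp (Real.measurable_exp.comp measurable_neg)) hb
    have heq1 : (∫⁻ t in Set.Ioi (0:ℝ), ENNReal.ofReal (Real.exp (-t))) = 1 := by
      rw [← ofReal_integral_eq_lintegral_ofReal
        (by exact (by simpa using exp_neg_integrableOn_Ioi 0 one_pos : IntegrableOn (fun x : ℝ => Real.exp (-x)) (Set.Ioi 0)))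
        (Filter.Eventually.of_forall fun x => (Real.exp_pos _).le),
        integral_exp_neg_Ioi]
      simp
    calc (∫⁻ t in Set.Ioi (0:ℝ), P {a | t < g a}).toReal
        ≤ (1 : ℝ≥0∞).toReal := ENNReal.toReal_mono one_ne_top (heq1 ▸ hle)
      _ = 1 := by simp
  -- conclude
  have hpt : ∀ ω, M ω ≤ L + g ω := by
    intro ω
    have := le_max_left (M ω - L) 0
    simp only [hg_def]
    linarith
  calc ∫ ω, M ω ∂P ≤ ∫ ω, (L + g ω) ∂P :=
        integral_mono hMint ((integrable_const L).add hgint) hpt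
    _ = L + ∫ ω, g ω ∂P := by
        rw [integral_add (integrable_const L) hgint, integral_const]
        simp
    _ ≤ 1 + L := by linarith
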